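/- (Theorem of the ramée.) Let Δ be a line of ℝ² carrying six pairwise distinct points B, H, C, G, D, F satisfying Desargues' involution identity based on the couple (D,F), namely DG·DC·FB·FH = FG·FC·DB·DH. Let K be a point not on Δ, and let δ be a line not passing through K such that each of the six lines KB, KH, KC, KG, KD, KF meets δ, in points b, h, c, g, d, f respectively, these six points being pairwise distinct. Then dg·dc·fb·fh = fg·fc·db·dh; that is, the projected points satisfy the same involution identity based on the couple (d,f). -/

import Mathlib

noncomputable section

open EuclideanGeometry

abbrev Pt : Type := EuclideanSpace ℝ (Fin 2)

/-- The affine line through two points of the Euclidean plane. -/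
def lineThrough (x y : Pt) : AffineSubspace ℝ Pt := affineSpan ℝ {x, y}

/-- A subset of the plane is a line if it is the affine span of two distinct points. -/
def IsLine (s : AffineSubspace ℝ Pt) : Prop := ∃ x y : Pt, x ≠ y ∧ s = lineThrough x y

/-- 2D determinant of two vectors. -/
def det2 (u v : Pt) : ℝ := u 0 * v 1 - u 1 * v 0

lemma mem_lineThrough_param {p x y : Pt} (hp : p ∈ lineThrough x y) :
    ∃ r : ℝ, p = r • (y - x) + x := by
  have h2 : (p - x) +ᵥ x ∈ affineSpan ℝ {x, y} := by
    simpa [lineThrough, vadd_eq_add, sub_add_cancel] using hp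
  obtain ⟨r, hr⟩ := vadd_left_mem_affineSpan_pair.mp h2
  exact ⟨r, by rw [show y -ᵥ x = y - x from rfl] at hr; rw [hr]; abel⟩

lemma det2_zero_dep {u v : Pt} (hv : v ≠ 0) (h : det2 u v = 0) : ∃ r : ℝ, u = r • v := by
  have hv01 : v 0 ≠ 0 ∨ v 1 ≠ 0 := by
    by_contra hcon
    push_neg at hcon
    apply hv
    ext i
    fin_cases i <;> simp [hcon.1, hcon.2]
  unfold det2 at h
  rcases hv01 with h0 | h1
  · refine ⟨u 0 / v 0, ?_⟩
    ext i
    fin_cases i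
    · show u 0 = (u 0 / v 0) * v 0
      field_simp
    · show u 1 = (u 0 / v 0) * v 1
      field_simp
      nlinarith [h]
  · refine ⟨u 1 / v 1, ?_⟩
    ext i
    fin_cases i
    · show u 0 = (u 1 / v 1) * v 0
      field_simp
      nlinarith [h]
    · show u 1 = (u 1 / v 1) * v 1
      field_simp

lemma det2_param (a u : Pt) (s t : ℝ) :
    det2 (a + s • u) (a + t • u) = (t - s) * det2 a u := by
  simp only [det2, PiLp.add_apply, PiLp.smul_apply, smul_eq_mul]
  ring

lemma det2_smul_param (a u : Pt) (μ ν s t : ℝ) :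
    det2 (μ • (a + s • u)) (ν • (a + t • u)) = (μ * ν) * ((t - s) * det2 a u) := by
  simp only [det2, PiLp.add_apply, PiLp.smul_apply, smul_eq_mul]
  ring

lemma dist_sq_param {p q a u K : Pt} {s t : ℝ}
    (hp : p - K = a + s • u) (hq : q - K = a + t • u) :
    dist p q ^ 2 = (s - t) ^ 2 * ‖u‖ ^ 2 := by
  have hpq : p - q = (s - t) • u := by
    have : p - q = (p - K) - (q - K) := by abel
    rw [this, hp, hq, sub_smul]
    abel
  rw [dist_eq_norm, hpq, norm_smul, mul_pow, Real.norm_eq_abs, sq_abs]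

theorem ramee
    (B H C G D F : Pt)
    (hdist : List.Pairwise (· ≠ ·) [B, H, C, G, D, F])
    (hcol : Collinear ℝ ({B, H, C, G, D, F} : Set Pt))
    (hinv : dist D G * dist D C * dist F B * dist F H
          = dist F G * dist F C * dist D B * dist D H)
    (K : Pt) (hK : K ∉ lineThrough B H)
    (δ : AffineSubspace ℝ Pt) (hδ : IsLine δ) (hKδ : K ∉ δ)
    (b h c g d f : Pt)
    (hb : b ∈ lineThrough K B) (hbδ : b ∈ δ)
    (hh : h ∈ lineThrough K H) (hhδ : h ∈ δ)
    (hc : c ∈ lineThrough K C) (hcδ : c ∈ δ)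
    (hg : g ∈ lineThrough K G) (hgδ : g ∈ δ)
    (hd : d ∈ lineThrough K D) (hdδ : d ∈ δ)
    (hf : f ∈ lineThrough K F) (hfδ : f ∈ δ)
    (hdist' : List.Pairwise (· ≠ ·) [b, h, c, g, d, f]) :
    dist d g * dist d c * dist f b * dist f h
      = dist f g * dist f c * dist d b * dist d h := by
  -- distinctness facts
  have hBH : B ≠ H := by simp at hdist; tauto
  obtain ⟨x, y, hxy, rfl⟩ := hδ
  -- line Δ setup
  set aΔ : Pt := B - K with haΔ
  set uΔ : Pt := H - B with huΔ
  have huΔ0 : uΔ ≠ 0 := sub_ne_zero.mpr hBH.symm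
  set W : ℝ := det2 aΔ uΔ with hWdef
  have hW : W ≠ 0 := by
    intro h0
    obtain ⟨r, hr⟩ := det2_zero_dep huΔ0 h0
    apply hK
    have : K = (-r) • (H - B) + B := by
      rw [haΔ] at hr; rw [neg_smul, ← huΔ, ← hr]; abel
    have hm := AffineMap.lineMap_mem_affineSpan_pair (k := ℝ) (-r) B H
    show K ∈ affineSpan ℝ {B, H}
    rw [this]
    simpa [AffineMap.lineMap_apply, vsub_eq_sub, vadd_eq_add] using hm
  -- line δ setup
  set aδ : Pt := x - K with haδ
  set uδ : Pt := y - x with huδ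
  have huδ0 : uδ ≠ 0 := sub_ne_zero.mpr hxy.symm
  set w : ℝ := det2 aδ uδ with hwdef
  have hw : w ≠ 0 := by
    intro h0
    obtain ⟨r, hr⟩ := det2_zero_dep huδ0 h0
    apply hKδ
    have : K = (-r) • (y - x) + x := by
      rw [haδ] at hr; rw [neg_smul, ← huδ, ← hr]; abel
    have hm := AffineMap.lineMap_mem_affineSpan_pair (k := ℝ) (-r) x y
    show K ∈ affineSpan ℝ {x, y}
    rw [this]
    simpa [AffineMap.lineMap_apply, vsub_eq_sub, vadd_eq_add] using hm
  -- parameters of big points on Δ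
  have hBmem : B ∈ ({B, H, C, G, D, F} : Set Pt) := by simp
  have hHmem : H ∈ ({B, H, C, G, D, F} : Set Pt) := by simp
  have hCl : C ∈ lineThrough B H :=
    hcol.mem_affineSpan_of_mem_of_ne hBmem hHmem (by simp) hBH
  have hGl : G ∈ lineThrough B H :=
    hcol.mem_affineSpan_of_mem_of_ne hBmem hHmem (by simp) hBH
  have hDl : D ∈ lineThrough B H :=
    hcol.mem_affineSpan_of_mem_of_ne hBmem hHmem (by simp) hBH
  have hFl : F ∈ lineThrough B H :=
    hcol.mem_affineSpan_of_mem_of_ne hBmem hHmem (by simp) hBH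
  obtain ⟨rC, hrC⟩ := mem_lineThrough_param hCl
  obtain ⟨rG, hrG⟩ := mem_lineThrough_param hGl
  obtain ⟨rD, hrD⟩ := mem_lineThrough_param hDl
  obtain ⟨rF, hrF⟩ := mem_lineThrough_param hFl
  -- big points minus K
  have hBK : B - K = aΔ + (0 : ℝ) • uΔ := by simp [haΔ]
  have hHK : H - K = aΔ + (1 : ℝ) • uΔ := by simp [haΔ, huΔ]
  have hCK : C - K = aΔ + rC • uΔ := by rw [hrC, haΔ, huΔ]; abel
  have hGK : G - K = aΔ + rG • uΔ := by rw [hrG, haΔ, huΔ]; abel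
  have hDK : D - K = aΔ + rD • uΔ := by rw [hrD, haΔ, huΔ]; abel
  have hFK : F - K = aΔ + rF • uΔ := by rw [hrF, haΔ, huΔ]; abel
  -- small points: projections from K
  obtain ⟨μb, hμb⟩ := mem_lineThrough_param hb
  obtain ⟨μh, hμh⟩ := mem_lineThrough_param hh
  obtain ⟨μc, hμc⟩ := mem_lineThrough_param hc
  obtain ⟨μg, hμg⟩ := mem_lineThrough_param hg
  obtain ⟨μd, hμd⟩ := mem_lineThrough_param hd
  obtain ⟨μf, hμf⟩ := mem_lineThrough_param hf
  have hbK : b - K = μb • (B - K) := by rw [hμb]; abel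
  have hhK : h - K = μh • (H - K) := by rw [hμh]; abel
  have hcK : c - K = μc • (C - K) := by rw [hμc]; abel
  have hgK : g - K = μg • (G - K) := by rw [hμg]; abel
  have hdK : d - K = μd • (D - K) := by rw [hμd]; abel
  have hfK : f - K = μf • (F - K) := by rw [hμf]; abel
  -- small points on δ
  obtain ⟨sb, hsb⟩ := mem_lineThrough_param hbδ
  obtain ⟨sh, hsh⟩ := mem_lineThrough_param hhδ
  obtain ⟨sc, hsc⟩ := mem_lineThrough_param hcδ
  obtain ⟨sg, hsg⟩ := mem_lineThrough_param hgδ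
  obtain ⟨sd, hsd⟩ := mem_lineThrough_param hdδ
  obtain ⟨sf, hsf⟩ := mem_lineThrough_param hfδ
  have hbδ' : b - K = aδ + sb • uδ := by rw [hsb, haδ, huδ]; abel
  have hhδ' : h - K = aδ + sh • uδ := by rw [hsh, haδ, huδ]; abel
  have hcδ' : c - K = aδ + sc • uδ := by rw [hsc, haδ, huδ]; abel
  have hgδ' : g - K = aδ + sg • uδ := by rw [hsg, haδ, huδ]; abel
  have hdδ' : d - K = aδ + sd • uδ := by rw [hsd, haδ, huδ]; abel
  have hfδ' : f - K = aδ + sf • uδ := by rw [hsf, haδ, huδ]; abel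
  -- pair equations
  have pair : ∀ (p q : Pt) (μ ν s t r1 r2 : ℝ),
      p - K = μ • (aΔ + r1 • uΔ) → q - K = ν • (aΔ + r2 • uΔ) →
      p - K = aδ + s • uδ → q - K = aδ + t • uδ →
      (t - s) * w = (μ * ν) * ((r2 - r1) * W) := by
    intro p q μ ν s t r1 r2 h1 h2 h3 h4
    have e1 : det2 (p - K) (q - K) = (t - s) * w := by
      rw [h3, h4, det2_param, hwdef]
    have e2 : det2 (p - K) (q - K) = (μ * ν) * ((r2 - r1) * W) := by
      rw [h1, h2, det2_smul_param, hWdef]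
    rw [← e1, e2]
  have e_dg : (sg - sd) * w = (μd * μg) * ((rG - rD) * W) :=
    pair d g μd μg sd sg rD rG (hdK.trans (by rw [hDK])) (hgK.trans (by rw [hGK])) hdδ' hgδ'
  have e_dc : (sc - sd) * w = (μd * μc) * ((rC - rD) * W) :=
    pair d c μd μc sd sc rD rC (hdK.trans (by rw [hDK])) (hcK.trans (by rw [hCK])) hdδ' hcδ'
  have e_fb : (sb - sf) * w = (μf * μb) * ((0 - rF) * W) :=
    pair f b μf μb sf sb rF 0 (hfK.trans (by rw [hFK])) (hbK.trans (by rw [hBK])) hfδ' hbδ'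
  have e_fh : (sh - sf) * w = (μf * μh) * ((1 - rF) * W) :=
    pair f h μf μh sf sh rF 1 (hfK.trans (by rw [hFK])) (hhK.trans (by rw [hHK])) hfδ' hhδ'
  have e_fg : (sg - sf) * w = (μf * μg) * ((rG - rF) * W) :=
    pair f g μf μg sf sg rF rG (hfK.trans (by rw [hFK])) (hgK.trans (by rw [hGK])) hfδ' hgδ'
  have e_fc : (sc - sf) * w = (μf * μc) * ((rC - rF) * W) :=
    pair f c μf μc sf sc rF rC (hfK.trans (by rw [hFK])) (hcK.trans (by rw [hCK])) hfδ' hcδ'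
  have e_db : (sb - sd) * w = (μd * μb) * ((0 - rD) * W) :=
    pair d b μd μb sd sb rD 0 (hdK.trans (by rw [hDK])) (hbK.trans (by rw [hBK])) hdδ' hbδ'
  have e_dh : (sh - sd) * w = (μd * μh) * ((1 - rD) * W) :=
    pair d h μd μh sd sh rD 1 (hdK.trans (by rw [hDK])) (hhK.trans (by rw [hHK])) hdδ' hhδ'
  -- squared involution identity on Δ
  have dDG := dist_sq_param hDK hGK
  have dDC := dist_sq_param hDK hCK
  have dFB := dist_sq_param hFK hBK
  have dFH := dist_sq_param hFK hHK
  have dFG := dist_sq_param hFK hGK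
  have dFC := dist_sq_param hFK hCK
  have dDB := dist_sq_param hDK hBK
  have dDH := dist_sq_param hDK hHK
  have hinv2 : (dist D G * dist D C * dist F B * dist F H) ^ 2
      = (dist F G * dist F C * dist D B * dist D H) ^ 2 := by rw [hinv]
  have hinv3 : ((rD - rG) ^ 2 * (rD - rC) ^ 2 * (rF - 0) ^ 2 * (rF - 1) ^ 2) * (‖uΔ‖ ^ 2) ^ 4
      = ((rF - rG) ^ 2 * (rF - rC) ^ 2 * (rD - 0) ^ 2 * (rD - 1) ^ 2) * (‖uΔ‖ ^ 2) ^ 4 := by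
    have lhs : (dist D G * dist D C * dist F B * dist F H) ^ 2
        = ((rD - rG) ^ 2 * (rD - rC) ^ 2 * (rF - 0) ^ 2 * (rF - 1) ^ 2) * (‖uΔ‖ ^ 2) ^ 4 := by
      rw [show (dist D G * dist D C * dist F B * dist F H) ^ 2
        = dist D G ^ 2 * dist D C ^ 2 * dist F B ^ 2 * dist F H ^ 2 by ring,
        dDG, dDC, dFB, dFH]; ring
    have rhs : (dist F G * dist F C * dist D B * dist D H) ^ 2
        = ((rF - rG) ^ 2 * (rF - rC) ^ 2 * (rD - 0) ^ 2 * (rD - 1) ^ 2) * (‖uΔ‖ ^ 2) ^ 4 := by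
      rw [show (dist F G * dist F C * dist D B * dist D H) ^ 2
        = dist F G ^ 2 * dist F C ^ 2 * dist D B ^ 2 * dist D H ^ 2 by ring,
        dFG, dFC, dDB, dDH]; ring
    rw [← lhs, ← rhs, hinv2]
  have hnΔ : ((‖uΔ‖ : ℝ) ^ 2) ^ 4 ≠ 0 :=
    pow_ne_zero 4 (pow_ne_zero 2 (norm_ne_zero_iff.mpr huΔ0))
  have Psq : (rD - rG) ^ 2 * (rD - rC) ^ 2 * (rF - 0) ^ 2 * (rF - 1) ^ 2
      = (rF - rG) ^ 2 * (rF - rC) ^ 2 * (rD - 0) ^ 2 * (rD - 1) ^ 2 :=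
    mul_right_cancel₀ hnΔ hinv3
  -- key identity for projected parameters
  have key : ((sd - sg) ^ 2 * (sd - sc) ^ 2 * (sf - sb) ^ 2 * (sf - sh) ^ 2) * w ^ 8
      = ((sf - sg) ^ 2 * (sf - sc) ^ 2 * (sd - sb) ^ 2 * (sd - sh) ^ 2) * w ^ 8 := by
    have l1 : ((sd - sg) ^ 2 * (sd - sc) ^ 2 * (sf - sb) ^ 2 * (sf - sh) ^ 2) * w ^ 8
        = ((sg - sd) * w) ^ 2 * (((sc - sd) * w) ^ 2 * (((sb - sf) * w) ^ 2
          * ((sh - sf) * w) ^ 2)) := by ring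
    have r1 : ((sf - sg) ^ 2 * (sf - sc) ^ 2 * (sd - sb) ^ 2 * (sd - sh) ^ 2) * w ^ 8
        = ((sg - sf) * w) ^ 2 * (((sc - sf) * w) ^ 2 * (((sb - sd) * w) ^ 2
          * ((sh - sd) * w) ^ 2)) := by ring
    rw [l1, r1, e_dg, e_dc, e_fb, e_fh, e_fg, e_fc, e_db, e_dh]
    linear_combination (μd ^ 4 * μg ^ 2 * μc ^ 2 * μf ^ 4 * μb ^ 2 * μh ^ 2 * W ^ 8) * Psq
  have keyS : (sd - sg) ^ 2 * (sd - sc) ^ 2 * (sf - sb) ^ 2 * (sf - sh) ^ 2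
      = (sf - sg) ^ 2 * (sf - sc) ^ 2 * (sd - sb) ^ 2 * (sd - sh) ^ 2 :=
    mul_right_cancel₀ (pow_ne_zero 8 hw) key
  -- squared distances of projected points
  have ddg := dist_sq_param hdδ' hgδ'
  have ddc := dist_sq_param hdδ' hcδ'
  have dfb := dist_sq_param hfδ' hbδ'
  have dfh := dist_sq_param hfδ' hhδ'
  have dfg := dist_sq_param hfδ' hgδ'
  have dfc := dist_sq_param hfδ' hcδ'
  have ddb := dist_sq_param hdδ' hbδ'
  have ddh := dist_sq_param hdδ' hhδ'
  have hL2 : (dist d g * dist d c * dist f b * dist f h) ^ 2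
      = (dist f g * dist f c * dist d b * dist d h) ^ 2 := by
    rw [show (dist d g * dist d c * dist f b * dist f h) ^ 2
      = dist d g ^ 2 * dist d c ^ 2 * dist f b ^ 2 * dist f h ^ 2 by ring,
      show (dist f g * dist f c * dist d b * dist d h) ^ 2
      = dist f g ^ 2 * dist f c ^ 2 * dist d b ^ 2 * dist d h ^ 2 by ring,
      ddg, ddc, dfb, dfh, dfg, dfc, ddb, ddh]
    linear_combination ((‖uδ‖ : ℝ) ^ 2) ^ 4 * keyS
  have hLpos : (0 : ℝ) ≤ dist d g * dist d c * dist f b * dist f h := by positivity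
  have hRpos : (0 : ℝ) ≤ dist f g * dist f c * dist d b * dist d h := by positivity
  exact (sq_eq_sq₀ hLpos hRpos).mp hL2
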